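/- For the RSK superinsertion: if $S_{j+1} = (S_{j-1} \leftarrow z_{i_j}) \leftarrow z_{i_{j+1}}$ where $S_{j-1}$ is $(k,\ell)$-semistandard and $z_{i_j} \geq z_{i_{j+1}}$ with $z_{i_{j+1}}$ an odd letter (in $\mathbf{y}$), then in the recording tableau the box of $j+1$ stands in relation $j \xrightarrow{\mathrm{NE}} j+1$ to the box of $j$ (north and/or east in the appropriate sense for the parities involved). -/

import Mathlib

/-! RSK superinsertion (Berele–Regev): even letters (values `≤ k`) are
column-inserted, odd letters (values `> k`) are row-inserted.  A tableau is a
list of rows.  Insertion returns the new tableau together with the coordinates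
`(row, column)` (0-indexed) of the newly created box. -/

/-- The entries of column `c` of the tableau `T`, read top to bottom. -/
def colList (T : List (List ℕ)) (c : ℕ) : List ℕ :=
  T.filterMap (fun row => row[c]?)

/-- The entry in row `r`, column `c` (0 if absent). -/
def entryAt (T : List (List ℕ)) (r c : ℕ) : ℕ := (T.getD r []).getD c 0

/-- Replace the entry in row `r`, column `c` by `z`. -/
def setAt (T : List (List ℕ)) (r c z : ℕ) : List (List ℕ) :=
  T.set r ((T.getD r []).set c z)

/-- Append `z` at the end of row `r` (creating a new bottom row if needed). -/
def addAt (T : List (List ℕ)) (r z : ℕ) : List (List ℕ) :=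
  if r < T.length then T.set r ((T.getD r []) ++ [z]) else T ++ [[z]]

/-- Row insertion: insert `z` into the first row displacing the smallest entry
`≥ z`; a displaced entry is row-inserted into the next row; if every entry is
`< z`, add `z` at the right end of the row. -/
def rowInsert : List (List ℕ) → ℕ → List (List ℕ) × ℕ × ℕ
  | [], z => ([[z]], 0, 0)
  | row :: rest, z =>
    match row.findIdx? (fun w => decide (z ≤ w)) with
    | none => ((row ++ [z]) :: rest, 0, row.length)
    | some i =>
      let w := row.getD i 0
      let res := rowInsert rest w
      ((row.set i z) :: res.1, res.2.1 + 1, res.2.2)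

/-- Column insertion (with fuel): insert `z` into column `c` displacing the
smallest entry `≥ z`; if the displaced entry is even it is column-inserted into
the next column, if it is odd it is row-inserted (starting from the first row);
if every entry is `< z`, add `z` at the bottom of column `c`. -/
def colInsert (k : ℕ) : ℕ → List (List ℕ) → ℕ → ℕ → List (List ℕ) × ℕ × ℕ
  | 0, T, _, _ => (T, 0, 0)
  | fuel + 1, T, z, c =>
    match (colList T c).findIdx? (fun w => decide (z ≤ w)) with
    | none => (addAt T (colList T c).length z, (colList T c).length, c)
    | some r =>
      let w := entryAt T r c
      let T' := setAt T r c z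
      if w ≤ k then colInsert k fuel T' w (c + 1)
      else rowInsert T' w

/-- RSK superinsertion of a letter `z` into `T`: column insertion for even
letters (`z ≤ k`), row insertion for odd letters (`z > k`). -/
def superInsert (k : ℕ) (T : List (List ℕ)) (z : ℕ) : List (List ℕ) × ℕ × ℕ :=
  if z ≤ k then colInsert k ((T.headD []).length + 2) T z 0
  else rowInsert T z

/-- `(k,ℓ)`-semistandardness for a tableau given as a list of rows. -/
def IsSSSYT (k ℓ : ℕ) (T : List (List ℕ)) : Prop :=
  (∀ row ∈ T, row ≠ []) ∧
  (∀ r, (T.getD (r + 1) []).length ≤ (T.getD r []).length) ∧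
  (∀ r c, c < (T.getD r []).length → 1 ≤ entryAt T r c ∧ entryAt T r c ≤ k + ℓ) ∧
  (∀ r c, c + 1 < (T.getD r []).length →
      entryAt T r c ≤ entryAt T r (c + 1) ∧
      (entryAt T r c = entryAt T r (c + 1) → entryAt T r c ≤ k)) ∧
  (∀ r c, c < (T.getD (r + 1) []).length →
      entryAt T r c ≤ entryAt T (r + 1) c ∧
      (entryAt T r c = entryAt T (r + 1) c → k < entryAt T r c))

namespace RSKAux

lemma rowInsert_cons_none {row : List ℕ} {rest : List (List ℕ)} {z : ℕ}
    (h : row.findIdx? (fun w => decide (z ≤ w)) = none) :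
    rowInsert (row :: rest) z = ((row ++ [z]) :: rest, 0, row.length) := by
  simp only [rowInsert, h]

lemma rowInsert_cons_some {row : List ℕ} {rest : List (List ℕ)} {z i : ℕ}
    (h : row.findIdx? (fun w => decide (z ≤ w)) = some i) :
    rowInsert (row :: rest) z =
      ((row.set i z) :: (rowInsert rest (row.getD i 0)).1,
        (rowInsert rest (row.getD i 0)).2.1 + 1,
        (rowInsert rest (row.getD i 0)).2.2) := by
  simp only [rowInsert, h]

/-- the final column of an insertion is the old length of the final row -/
lemma rowInsert_col : ∀ (T : List (List ℕ)) (z : ℕ),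
    (rowInsert T z).2.2 = (T.getD (rowInsert T z).2.1 []).length
  | [], z => by simp [rowInsert]
  | row :: rest, z => by
    cases h : row.findIdx? (fun w => decide (z ≤ w)) with
    | none => simp [rowInsert_cons_none h]
    | some i =>
      rw [rowInsert_cons_some h]
      simpa using rowInsert_col rest (row.getD i 0)

/-- lengths of rows after insertion -/
lemma rowInsert_len : ∀ (T : List (List ℕ)) (z r' : ℕ),
    ((rowInsert T z).1.getD r' []).length =
      (T.getD r' []).length + (if r' = (rowInsert T z).2.1 then 1 else 0)
  | [], z, r' => by
    cases r' <;> simp [rowInsert]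
  | row :: rest, z, r' => by
    cases h : row.findIdx? (fun w => decide (z ≤ w)) with
    | none =>
      rw [rowInsert_cons_none h]
      cases r' <;> simp
    | some i =>
      rw [rowInsert_cons_some h]
      cases r' with
      | zero => simp
      | succ s =>
        have := rowInsert_len rest (row.getD i 0) s
        simpa [Nat.succ_eq_add_one] using this

/-- monotonicity from adjacent comparisons -/
lemma getD_mono {l : List ℕ}
    (h : ∀ i, i + 1 < l.length → l.getD i 0 ≤ l.getD (i + 1) 0) :
    ∀ i j, i ≤ j → j < l.length → l.getD i 0 ≤ l.getD j 0 := by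
  intro i j hij hj
  induction j with
  | zero =>
    obtain rfl := Nat.le_zero.mp hij
    exact le_refl _
  | succ n ih =>
    rcases Nat.eq_or_lt_of_le hij with rfl | hlt
    · exact le_refl _
    · exact le_trans (ih (by omega) (by omega)) (h n hj)

/-- the structural invariants we need -/
def Nice (T : List (List ℕ)) : Prop :=
  (∀ r, (T.getD (r + 1) []).length ≤ (T.getD r []).length) ∧
  (∀ r i, i + 1 < (T.getD r []).length →
      (T.getD r []).getD i 0 ≤ (T.getD r []).getD (i + 1) 0) ∧
  (∀ r c, c < (T.getD (r + 1) []).length →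
      (T.getD r []).getD c 0 ≤ (T.getD (r + 1) []).getD c 0)

lemma Nice.tail {row : List ℕ} {rest : List (List ℕ)} (h : Nice (row :: rest)) :
    Nice rest :=
  ⟨fun r => h.1 (r + 1), fun r => h.2.1 (r + 1), fun r => h.2.2 (r + 1)⟩

lemma nice_of_isSSSYT {k ℓ : ℕ} {T : List (List ℕ)} (h : IsSSSYT k ℓ T) : Nice T :=
  ⟨h.2.1, fun r i hi => (h.2.2.2.1 r i hi).1, fun r c hc => (h.2.2.2.2 r c hc).1⟩

/-- column bound on the insertion path -/
lemma rowInsert_col_le : ∀ (T : List (List ℕ)) (z i : ℕ), Nice T →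
    (i < (T.getD 0 []).length → z ≤ (T.getD 0 []).getD i 0) →
    (rowInsert T z).2.2 ≤ i
  | [], z, i, _, _ => by simp [rowInsert]
  | row :: rest, z, i, hN, hz => by
    cases h : row.findIdx? (fun w => decide (z ≤ w)) with
    | none =>
      rw [rowInsert_cons_none h]
      simp only [List.findIdx?_eq_none_iff] at h
      simp only [List.getD_cons_zero] at hz
      by_contra hcon
      push_neg at hcon
      have hi : i < row.length := by simpa using hcon
      have hzi := hz hi
      rw [List.getD_eq_getElem _ _ hi] at hzi
      have hfalse := h _ (List.getElem_mem hi)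
      simp only [decide_eq_false_iff_not, not_le] at hfalse
      omega
    | some j =>
      rw [rowInsert_cons_some h]
      rw [List.findIdx?_eq_some_iff_getElem] at h
      obtain ⟨hj, hpj, hmin⟩ := h
      have hji : j ≤ i := by
        by_contra hcon
        push_neg at hcon
        have hi : i < row.length := lt_trans hcon hj
        have hzi := hz (by simpa using hi)
        simp only [List.getD_cons_zero] at hzi
        rw [List.getD_eq_getElem _ _ hi] at hzi
        have hm := hmin i hcon
        simp only [decide_eq_true_eq] at hm
        exact hm hzi
      have hrec := rowInsert_col_le rest (row.getD j 0) j hN.tail ?_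
      · exact le_trans hrec hji
      · intro hjlen
        have := hN.2.2 0 j (by simpa using hjlen)
        simpa using this

/-- the main bumping-route comparison lemma -/
lemma rowInsert_main : ∀ (T : List (List ℕ)) (z1 z2 : ℕ), Nice T → z2 ≤ z1 →
    (rowInsert T z1).2.1 ≤ (rowInsert (rowInsert T z1).1 z2).2.1 ∧
    (rowInsert (rowInsert T z1).1 z2).2.2 ≤ (rowInsert T z1).2.2
  | [], z1, z2, _, h12 => by
    have h0 : [z1].findIdx? (fun w => decide (z2 ≤ w)) = some 0 := by
      simp [List.findIdx?, List.findIdx?.go, h12]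
    simp only [rowInsert, h0]
    simp [rowInsert]
  | row :: rest, z1, z2, hN, h12 => by
    cases h1 : row.findIdx? (fun w => decide (z1 ≤ w)) with
    | none =>
      rw [rowInsert_cons_none h1]
      -- second insertion into (row ++ [z1]) :: rest
      cases h2 : (row ++ [z1]).findIdx? (fun w => decide (z2 ≤ w)) with
      | none =>
        rw [List.findIdx?_eq_none_iff] at h2
        have := h2 z1 (by simp)
        simp [h12] at this
      | some i2 =>
        rw [rowInsert_cons_some h2]
        refine ⟨Nat.zero_le _, ?_⟩
        -- final column of second insertion ≤ row.length
        rw [List.findIdx?_eq_some_iff_getElem] at h2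
        obtain ⟨hi2, hp2, -⟩ := h2
        simp only [List.length_append, List.length_cons] at hi2
        apply rowInsert_col_le rest _ row.length hN.tail
        intro hlen
        exfalso
        have := hN.1 0
        simp only [List.getD_cons_succ, List.getD_cons_zero] at this
        omega
    | some i1 =>
      rw [rowInsert_cons_some h1]
      rw [List.findIdx?_eq_some_iff_getElem] at h1
      obtain ⟨hi1, hp1, hmin1⟩ := h1
      simp only [decide_eq_true_eq] at hp1
      -- second insertion into (row.set i1 z1) :: (rowInsert rest w1).1
      cases h2 : (row.set i1 z1).findIdx? (fun w => decide (z2 ≤ w)) with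
      | none =>
        rw [List.findIdx?_eq_none_iff] at h2
        have hmem : z1 ∈ row.set i1 z1 := by
          have h' : i1 < (row.set i1 z1).length := by simpa using hi1
          have hg := List.getElem_mem h'
          rwa [List.getElem_set_self] at hg
        have := h2 z1 hmem
        simp [h12] at this
      | some i2 =>
        rw [rowInsert_cons_some h2]
        rw [List.findIdx?_eq_some_iff_getElem] at h2
        obtain ⟨hi2, hp2, hmin2⟩ := h2
        simp only [decide_eq_true_eq] at hp2
        have hi2len : i2 < row.length := by simpa using hi2
        -- i2 ≤ i1
        have hle : i2 ≤ i1 := by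
          by_contra hcon
          push_neg at hcon
          have := hmin2 i1 hcon
          simp only [decide_eq_true_eq] at this
          rw [List.getElem_set_self] at this
          exact this h12
        -- the bumped value of the second insertion is ≤ w1
        have hw2 : (row.set i1 z1).getD i2 0 ≤ row.getD i1 0 := by
          rcases Nat.eq_or_lt_of_le hle with rfl | hlt
          · rw [List.getD_eq_getElem _ _ (by simpa using hi2), List.getElem_set_self,
              List.getD_eq_getElem _ _ hi2len]
            exact hp1
          · rw [List.getD_eq_getElem _ _ (by simpa using hi2),
              List.getElem_set_ne (by omega)]
            rw [← List.getD_eq_getElem _ _ hi2len]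
            exact getD_mono (by simpa using hN.2.1 0) i2 i1 (le_of_lt hlt) hi1
        have := rowInsert_main rest (row.getD i1 0) ((row.set i1 z1).getD i2 0)
          hN.tail hw2
        exact ⟨Nat.succ_le_succ this.1, this.2⟩

end RSKAux

/-- Proposition 5.5(2) ($m=1$): if `z₁ ≥ z₂` and `z₂` is an odd letter, then
after the two successive superinsertions the relation `j →NE j+1` holds in the
recording tableau; for two odd entries this means geometrically that the new
box of the second insertion is south and/or west of the new box of the first
one. -/
theorem stmt_11 (k ℓ : ℕ) (S0 : List (List ℕ)) (hS : IsSSSYT k ℓ S0)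
    (z1 z2 : ℕ) (hz1 : 1 ≤ z1) (hz1' : z1 ≤ k + ℓ)
    (hz2 : k < z2) (hz2' : z2 ≤ k + ℓ) (hge : z2 ≤ z1) :
    (superInsert k S0 z1).2.1 ≤ (superInsert k (superInsert k S0 z1).1 z2).2.1 ∧
    (superInsert k (superInsert k S0 z1).1 z2).2.2 ≤ (superInsert k S0 z1).2.2 ∧
    (superInsert k S0 z1).2 ≠ (superInsert k (superInsert k S0 z1).1 z2).2 := by
  have hz1k : k < z1 := lt_of_lt_of_le hz2 hge
  have e1 : superInsert k S0 z1 = rowInsert S0 z1 := by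
    simp [superInsert, not_le.mpr hz1k]
  have e2 : superInsert k (superInsert k S0 z1).1 z2
      = rowInsert (rowInsert S0 z1).1 z2 := by
    rw [e1]; simp [superInsert, not_le.mpr hz2]
  rw [e2, e1]
  have hN := RSKAux.nice_of_isSSSYT hS
  obtain ⟨h1, h2⟩ := RSKAux.rowInsert_main S0 z1 z2 hN hge
  refine ⟨h1, h2, ?_⟩
  intro heq
  have hr : (rowInsert S0 z1).2.1 = (rowInsert (rowInsert S0 z1).1 z2).2.1 :=
    congrArg Prod.fst heq
  have hc : (rowInsert S0 z1).2.2 = (rowInsert (rowInsert S0 z1).1 z2).2.2 :=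
    congrArg Prod.snd heq
  have c1 := RSKAux.rowInsert_col S0 z1
  have c2 := RSKAux.rowInsert_col (rowInsert S0 z1).1 z2
  rw [← hr] at c2
  rw [RSKAux.rowInsert_len S0 z1 ((rowInsert S0 z1).2.1)] at c2
  simp only [if_pos rfl] at c2
  have hbad := (c1.symm.trans hc).trans c2
  simp at hbad
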